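/- Let m ≥ 3. A vector α in the space of functions V → 𝔽₂ belongs to the code C^a if and only if its support S = {v ∈ V : α(v) ≠ 0} satisfies: |S| is even, Σ_{v∈S} v = 0 in 𝔽₂^{2m}, and Σ_{v∈S} θ₀(v) = 0 in 𝔽₂. -/

import Mathlib

open Matrix

/-- Row vectors in `𝔽₂^{2m}`, with coordinates indexed by `Fin m ⊕ Fin m`
(the first block and the second block of `m` coordinates). -/
abbrev Vm (m : ℕ) := (Fin m ⊕ Fin m) → ZMod 2

/-- The block matrix `e = (0 Iₘ; 0 0)`. -/
def eMat (m : ℕ) : Matrix (Fin m ⊕ Fin m) (Fin m ⊕ Fin m) (ZMod 2) :=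
  Matrix.fromBlocks 0 1 0 0

/-- The block matrix `f = e + eᵀ = (0 Iₘ; Iₘ 0)`. -/
def fMat (m : ℕ) : Matrix (Fin m ⊕ Fin m) (Fin m ⊕ Fin m) (ZMod 2) :=
  eMat m + (eMat m)ᵀ

/-- The alternating bilinear form `φ(u,v) = u f vᵀ`. -/
def phi (m : ℕ) (u v : Vm m) : ZMod 2 := u ⬝ᵥ (fMat m).mulVec v

/-- The quadratic form `θ₀(u) = u e uᵀ`. -/
def theta0 (m : ℕ) (u : Vm m) : ZMod 2 := u ⬝ᵥ (eMat m).mulVec u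

/-- The quadratic form `θ_a(u) = θ₀(u) + φ(u,a)`. -/
def theta (m : ℕ) (a u : Vm m) : ZMod 2 := theta0 m u + phi m u a

/-- The transvection `t_c : u ↦ u + φ(u,c)·c`. -/
def tvec (m : ℕ) (c u : Vm m) : Vm m := u + phi m u c • c

/-- The point set `V^ε = {v : θ₀(v) = ε}` as a subtype. -/
abbrev Veps (m : ℕ) (ε : ZMod 2) := {v : Vm m // theta0 m v = ε}

/-- The characteristic vector of a finite set. -/
def chi {α : Type*} [DecidableEq α] (S : Finset α) : α → ZMod 2 :=
  fun x => if x ∈ S then 1 else 0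

/-- The code `C^ε`: the `𝔽₂`-span of the characteristic vectors of
4-element subsets of `V^ε` summing to zero. -/
def Ceps (m : ℕ) (ε : ZMod 2) : Submodule (ZMod 2) (Veps m ε → ZMod 2) :=
  Submodule.span (ZMod 2)
    {w | ∃ S : Finset (Veps m ε), S.card = 4 ∧ (∑ x ∈ S, (x : Vm m)) = 0 ∧ w = chi S}

/-- The code `C^a`: the `𝔽₂`-span of the characteristic vectors of
4-element subsets of `V` summing to zero whose `θ₀`-values sum to zero. -/
def Ca (m : ℕ) : Submodule (ZMod 2) (Vm m → ZMod 2) :=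
  Submodule.span (ZMod 2)
    {w | ∃ T : Finset (Vm m), T.card = 4 ∧ (∑ x ∈ T, x) = 0 ∧
         (∑ x ∈ T, theta0 m x) = 0 ∧ w = chi T}

-- ZMod 2 helpers
lemma z2_add_self (z : ZMod 2) : z + z = 0 := by revert z; decide
lemma z2_ne_zero {z : ZMod 2} (h : z ≠ 0) : z = 1 := by revert z; decide
lemma v_add_self {m : ℕ} (u : Vm m) : u + u = 0 := funext fun j => z2_add_self _
lemma v_add_eq_zero_iff {m : ℕ} (u v : Vm m) : u + v = 0 ↔ u = v := by
  constructor
  · intro h; funext j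
    have h2 : u j + v j = 0 := congrFun h j
    revert h2; generalize u j = a; generalize v j = b; revert a b; decide
  · rintro rfl; exact v_add_self u

-- bilinearity
lemma phi_add_left (m : ℕ) (u v c : Vm m) : phi m (u + v) c = phi m u c + phi m v c := by
  simp [phi, add_dotProduct]
lemma phi_add_right (m : ℕ) (u v c : Vm m) : phi m c (u + v) = phi m c u + phi m c v := by
  simp [phi, mulVec_add, dotProduct_add]
lemma phi_smul_right (m : ℕ) (r : ZMod 2) (u c : Vm m) : phi m c (r • u) = r * phi m c u := by
  simp [phi, mulVec_smul, dotProduct_smul, smul_eq_mul, mul_comm]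

lemma dot_transpose (m : ℕ) (A : Matrix (Fin m ⊕ Fin m) (Fin m ⊕ Fin m) (ZMod 2)) (u v : Vm m) :
    u ⬝ᵥ Aᵀ.mulVec v = v ⬝ᵥ A.mulVec u := by
  simp only [dotProduct, mulVec, dotProduct, transpose_apply, Finset.mul_sum, Finset.sum_mul]
  rw [Finset.sum_comm]
  apply Finset.sum_congr rfl; intro i _; apply Finset.sum_congr rfl; intro j _; ring

lemma theta0_add (m : ℕ) (u v : Vm m) :
    theta0 m (u + v) = theta0 m u + theta0 m v + phi m u v := by
  simp only [theta0, phi, fMat, add_mulVec, mulVec_add, dotProduct_add, add_dotProduct]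
  rw [dot_transpose]
  ring

lemma phi_self (m : ℕ) (u : Vm m) : phi m u u = 0 := by
  simp only [phi, fMat, add_mulVec, dotProduct_add]
  rw [dot_transpose]
  exact z2_add_self _

lemma fMat_mulVec (m : ℕ) (v : Vm m) : (fMat m).mulVec v = fun j => v j.swap := by
  funext j
  cases j with
  | inl i =>
    simp [fMat, eMat, mulVec, dotProduct, Fintype.sum_sum_type, fromBlocks,
      Matrix.one_apply, Sum.swap]
  | inr i =>
    simp [fMat, eMat, mulVec, dotProduct, Fintype.sum_sum_type, fromBlocks,
      Matrix.one_apply, Sum.swap]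

lemma phi_single (m : ℕ) (u : Vm m) (j : Fin m ⊕ Fin m) :
    phi m u (Pi.single j.swap 1) = u j := by
  have h : ∀ k, (Pi.single j.swap 1 : Vm m) (Sum.swap k) = if k = j then 1 else 0 := by
    intro k
    rw [Pi.single_apply]
    congr 1
    apply propext
    constructor
    · intro h
      have := congrArg Sum.swap h
      simpa [Sum.swap_swap] using this
    · intro h; rw [h]
  simp only [phi, fMat_mulVec, dotProduct, h, mul_ite, mul_one, mul_zero]
  simp

lemma exists_coord_one {m : ℕ} {u : Vm m} (h : u ≠ 0) : ∃ j, u j = 1 := by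
  by_contra hc
  push_neg at hc
  apply h
  funext j
  rw [Pi.zero_apply]
  have h2 := hc j
  revert h2; generalize u j = a; revert a; decide

lemma exists_phi_10 {m : ℕ} {p q : Vm m} (hp : p ≠ 0) (hpq : p + q ≠ 0) :
    ∃ c, phi m p c = 1 ∧ phi m q c = 0 := by
  by_cases hA : ∃ j, p j = 1 ∧ q j = 0
  · obtain ⟨j, hpj, hqj⟩ := hA
    exact ⟨Pi.single j.swap 1, by rw [phi_single, hpj], by rw [phi_single, hqj]⟩
  · push_neg at hA
    obtain ⟨j, hpj⟩ := exists_coord_one hp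
    have hqj : q j = 1 := z2_ne_zero (hA j hpj)
    obtain ⟨k, hk⟩ := exists_coord_one hpq
    have hk' : p k + q k = 1 := hk
    have hpk : p k = 0 := by
      by_contra h
      have h1 := z2_ne_zero h
      have h2 := z2_ne_zero (hA k h1)
      rw [h1, h2] at hk'
      exact absurd hk' (by decide)
    have hqk : q k = 1 := by rw [hpk, zero_add] at hk'; exact hk'
    refine ⟨Pi.single j.swap 1 + Pi.single k.swap 1, ?_, ?_⟩
    · rw [phi_add_right, phi_single, phi_single, hpj, hpk, add_zero]
    · rw [phi_add_right, phi_single, phi_single, hqj, hqk]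
      decide

lemma exists_phi_eq {m : ℕ} {p q : Vm m} (hp : p ≠ 0) (hq : q ≠ 0) (hpq : p + q ≠ 0)
    (α β : ZMod 2) : ∃ c, phi m p c = α ∧ phi m q c = β := by
  obtain ⟨c1, hc1p, hc1q⟩ := exists_phi_10 hp hpq
  have hqp : q + p ≠ 0 := by rwa [add_comm] at hpq
  obtain ⟨c2, hc2q, hc2p⟩ := exists_phi_10 hq hqp
  refine ⟨α • c1 + β • c2, ?_, ?_⟩
  · rw [phi_add_right, phi_smul_right, phi_smul_right, hc1p, hc2p, mul_one, mul_zero, add_zero]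
  · rw [phi_add_right, phi_smul_right, phi_smul_right, hc1q, hc2q, mul_one, mul_zero, zero_add]

lemma card_Vm (m : ℕ) : Fintype.card (Vm m) = 2 ^ (2 * m) := by
  rw [Fintype.card_fun]
  simp [two_mul]

lemma z2_cancel1 (a b : ZMod 2) : a + (a + b) = b := by revert a b; decide
lemma z2_cancel2 (a b : ZMod 2) : b + (a + b) = a := by revert a b; decide

lemma fiber_card {m : ℕ} {p q : Vm m} (hp : p ≠ 0) (hq : q ≠ 0) (hpq : p + q ≠ 0)
    (α β : ZMod 2) :
    4 * (Finset.univ.filter (fun c : Vm m => phi m p c = α ∧ phi m q c = β)).card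
      = 2 ^ (2 * m) := by
  classical
  set Φ : Vm m → ZMod 2 × ZMod 2 := fun c => (phi m p c, phi m q c) with hΦ
  have hΦadd : ∀ c c', Φ (c + c') = (phi m p c + phi m p c', phi m q c + phi m q c') := by
    intro c c'
    rw [hΦ]
    simp only [phi_add_right]
  have hfib : ∀ t t' : ZMod 2 × ZMod 2,
      (Finset.univ.filter (fun c => Φ c = t)).card
        = (Finset.univ.filter (fun c => Φ c = t')).card := by
    intro t t'
    obtain ⟨c₀, h₀1, h₀2⟩ := exists_phi_eq hp hq hpq (t.1 + t'.1) (t.2 + t'.2)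
    apply Finset.card_nbij' (fun c => c + c₀) (fun c => c + c₀)
    · intro c hc
      simp only [Finset.mem_coe, Finset.mem_filter, Finset.mem_univ, true_and] at hc ⊢
      rw [hΦadd, show phi m p c = t.1 from congrArg Prod.fst hc,
        show phi m q c = t.2 from congrArg Prod.snd hc, h₀1, h₀2, z2_cancel1, z2_cancel1]
    · intro c hc
      simp only [Finset.mem_coe, Finset.mem_filter, Finset.mem_univ, true_and] at hc ⊢
      rw [hΦadd, show phi m p c = t'.1 from congrArg Prod.fst hc,
        show phi m q c = t'.2 from congrArg Prod.snd hc, h₀1, h₀2, z2_cancel2, z2_cancel2]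
    · intro c _; show c + c₀ + c₀ = c; rw [add_assoc, v_add_self, add_zero]
    · intro c _; show c + c₀ + c₀ = c; rw [add_assoc, v_add_self, add_zero]
  have htot : (Finset.univ : Finset (Vm m)).card
      = ∑ t : ZMod 2 × ZMod 2, (Finset.univ.filter (fun c => Φ c = t)).card :=
    Finset.card_eq_sum_card_fiberwise (fun x _ => Finset.mem_univ (Φ x))
  have h4 : ∑ t : ZMod 2 × ZMod 2, (Finset.univ.filter (fun c => Φ c = t)).card
      = 4 * (Finset.univ.filter (fun c => Φ c = (α, β))).card := by
    rw [Finset.sum_congr rfl (fun t _ => hfib t (α, β))]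
    rw [Finset.sum_const, Finset.card_univ]
    simp [smul_eq_mul]
  have hcard : (Finset.univ : Finset (Vm m)).card = 2 ^ (2*m) := by
    rw [Finset.card_univ, card_Vm]
  have hgoal : 4 * (Finset.univ.filter (fun c => Φ c = (α, β))).card = 2 ^ (2*m) := by
    rw [← h4, ← htot, hcard]
  convert hgoal using 3
  ext c
  simp [hΦ, Prod.ext_iff]

lemma exists_good_c {m : ℕ} (hm : 3 ≤ m) {p q : Vm m} (hp : p ≠ 0) (hq : q ≠ 0)
    (hpq : p + q ≠ 0) (α β : ZMod 2) (B : Finset (Vm m)) (hB : B.card ≤ 8) :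
    ∃ c, phi m p c = α ∧ phi m q c = β ∧ c ∉ B := by
  classical
  set F := Finset.univ.filter (fun c : Vm m => phi m p c = α ∧ phi m q c = β) with hF
  have h1 : 4 * F.card = 2 ^ (2*m) := fiber_card hp hq hpq α β
  have h2 : (64 : ℕ) ≤ 2 ^ (2*m) := by
    calc (64 : ℕ) = 2 ^ 6 := by norm_num
    _ ≤ 2 ^ (2*m) := Nat.pow_le_pow_right (by norm_num) (by omega)
  have h3 : 16 ≤ F.card := by omega
  have h4 : F.card ≤ (F \ B).card + B.card := Finset.card_le_card_sdiff_add_card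
  have h5 : 0 < (F \ B).card := by omega
  obtain ⟨c, hc⟩ := Finset.card_pos.mp h5
  rw [Finset.mem_sdiff] at hc
  obtain ⟨hcF, hcB⟩ := hc
  rw [hF, Finset.mem_filter] at hcF
  exact ⟨c, hcF.2.1, hcF.2.2, hcB⟩

section invariants
variable {m : ℕ}

/-- supp -/
noncomputable def supp (w : Vm m → ZMod 2) : Finset (Vm m) :=
  Finset.univ.filter (fun x => w x ≠ 0)

lemma sum_supp {M : Type*} [AddCommMonoid M] [Module (ZMod 2) M]
    (w : Vm m → ZMod 2) (g : Vm m → M) :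
    ∑ x ∈ supp w, g x = ∑ x : Vm m, w x • g x := by
  rw [supp, Finset.sum_filter]
  apply Finset.sum_congr rfl
  intro x _
  rcases eq_or_ne (w x) 0 with h | h
  · rw [if_neg (by simp [h]), h, zero_smul]
  · rw [if_pos h, z2_ne_zero h, one_smul]

lemma sum_chi {M : Type*} [AddCommMonoid M] [Module (ZMod 2) M]
    (T : Finset (Vm m)) (g : Vm m → M) :
    ∑ x : Vm m, chi T x • g x = ∑ x ∈ T, g x := by
  rw [← Finset.sum_filter_add_sum_filter_not Finset.univ (fun x => x ∈ T)]
  have h1 : ∀ x ∈ Finset.univ.filter (fun x : Vm m => x ∈ T), chi T x • g x = g x := by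
    intro x hx
    rw [Finset.mem_filter] at hx
    rw [chi, if_pos hx.2, one_smul]
  have h2 : ∀ x ∈ Finset.univ.filter (fun x : Vm m => ¬ x ∈ T), chi T x • g x = 0 := by
    intro x hx
    rw [Finset.mem_filter] at hx
    rw [chi, if_neg hx.2, zero_smul]
  rw [Finset.sum_congr rfl h1, Finset.sum_congr rfl h2, Finset.sum_const_zero, add_zero]
  congr 1
  ext x
  simp

lemma sum_weight_add {M : Type*} [AddCommMonoid M] [Module (ZMod 2) M]
    (u v : Vm m → ZMod 2) (g : Vm m → M) :
    ∑ x : Vm m, (u + v) x • g x = (∑ x : Vm m, u x • g x) + ∑ x : Vm m, v x • g x := by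
  rw [← Finset.sum_add_distrib]
  apply Finset.sum_congr rfl
  intro x _
  rw [Pi.add_apply, add_smul]

lemma w_eq_chi_supp (w : Vm m → ZMod 2) : w = chi (supp w) := by
  funext x
  rw [chi, supp]
  by_cases h : w x = 0
  · rw [if_neg (by simp [h]), h]
  · rw [if_pos (by simp [h]), z2_ne_zero h]

lemma generator_mem (T : Finset (Vm m)) (h4 : T.card = 4) (hs : (∑ x ∈ T, x) = 0)
    (ht : (∑ x ∈ T, theta0 m x) = 0) : chi T ∈ Ca m :=
  Submodule.subset_span ⟨T, h4, hs, ht, rfl⟩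

lemma v_lin_cancel {u v t : Vm m} (h : u + v = t) : v = u + t := by
  rw [← h, ← add_assoc, v_add_self, zero_add]

end invariants

lemma f_add_self {α : Type*} (u : α → ZMod 2) : u + u = 0 :=
  funext fun j => z2_add_self (u j)

lemma quad_props {m : ℕ} {a b c : Vm m} (hab : a ≠ b) (hca : c ≠ a) (hcb : c ≠ b)
    (hphi : phi m (a + b) c = phi m a b) :
    (({a, b, c, a + b + c} : Finset (Vm m)).card = 4) ∧
    ((∑ x ∈ ({a, b, c, a + b + c} : Finset (Vm m)), x) = 0) ∧
    ((∑ x ∈ ({a, b, c, a + b + c} : Finset (Vm m)), theta0 m x) = 0) := by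
  have hda : a + b + c ≠ a := fun h => hcb (by linear_combination h - f_add_self b)
  have hdb : a + b + c ≠ b := fun h => hca (by linear_combination h - f_add_self a)
  have hdc : a + b + c ≠ c := fun h => hab (by linear_combination h - f_add_self b)
  have hmem : a ∉ ({b, c, a+b+c} : Finset (Vm m)) := by
    simp [hab, Ne.symm hca, Ne.symm hda]
  have hmem2 : b ∉ ({c, a+b+c} : Finset (Vm m)) := by
    simp [Ne.symm hcb, Ne.symm hdb]
  have hmem3 : c ∉ ({a+b+c} : Finset (Vm m)) := by
    simp [Ne.symm hdc]
  refine ⟨?_, ?_, ?_⟩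
  · rw [show ({a, b, c, a+b+c} : Finset (Vm m)) = insert a (insert b (insert c {a+b+c})) from rfl,
      Finset.card_insert_of_notMem hmem, Finset.card_insert_of_notMem hmem2,
      Finset.card_insert_of_notMem hmem3, Finset.card_singleton]
  · rw [show ({a, b, c, a+b+c} : Finset (Vm m)) = insert a (insert b (insert c {a+b+c})) from rfl,
      Finset.sum_insert hmem, Finset.sum_insert hmem2, Finset.sum_insert hmem3,
      Finset.sum_singleton]
    linear_combination f_add_self a + f_add_self b + f_add_self c
  · rw [show ({a, b, c, a+b+c} : Finset (Vm m)) = insert a (insert b (insert c {a+b+c})) from rfl,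
      Finset.sum_insert hmem, Finset.sum_insert hmem2, Finset.sum_insert hmem3,
      Finset.sum_singleton]
    have hd : theta0 m (a + b + c) = theta0 m a + theta0 m b + phi m a b + theta0 m c
        + phi m (a + b) c := by
      rw [theta0_add m (a+b) c, theta0_add m a b]
    rw [hd, hphi]
    linear_combination z2_add_self (theta0 m a) + z2_add_self (theta0 m b)
      + z2_add_self (theta0 m c) + z2_add_self (phi m a b)

lemma mem_Ca_of_inv {m : ℕ} (hm : 3 ≤ m) :
    ∀ n (w : Vm m → ZMod 2), (supp w).card = n →
      (∑ x : Vm m, w x • (1 : ZMod 2)) = 0 →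
      (∑ x : Vm m, w x • x) = 0 →
      (∑ x : Vm m, w x • theta0 m x) = 0 → w ∈ Ca m := by
  intro n
  induction n using Nat.strong_induction_on with
  | _ n ih =>
  intro w hn h1 h2 h3
  have hcast : ((supp w).card : ZMod 2) = 0 := by
    have hs := sum_supp w (fun _ => (1 : ZMod 2))
    rw [h1] at hs
    rwa [Finset.sum_const, nsmul_eq_mul, mul_one] at hs
  have heven : 2 ∣ n := by
    rw [hn] at hcast
    exact (ZMod.natCast_eq_zero_iff n 2).mp hcast
  have hsum : (∑ x ∈ supp w, x) = 0 := by
    have hs := sum_supp w (fun x => x); rwa [h2] at hs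
  have hth : (∑ x ∈ supp w, theta0 m x) = 0 := by
    have hs := sum_supp w (fun x => theta0 m x); rwa [h3] at hs
  by_cases hn0 : n = 0
  · have : supp w = ∅ := Finset.card_eq_zero.mp (hn.trans hn0)
    have hw : w = 0 := by
      rw [w_eq_chi_supp w, this]
      funext v; rw [chi]; simp
    rw [hw]; exact zero_mem _
  by_cases hn2 : n = 2
  · exfalso
    obtain ⟨a, b, hab, hSab⟩ := Finset.card_eq_two.mp (hn.trans hn2)
    rw [hSab, Finset.sum_pair hab] at hsum
    exact hab (by linear_combination hsum - f_add_self b)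
  by_cases hn4 : n = 4
  · rw [w_eq_chi_supp w]
    exact generator_mem _ (hn.trans hn4) hsum hth
  -- now n ≥ 6
  have hn6 : 6 ≤ n := by omega
  set S := supp w with hSdef
  -- pick a, b, x, y
  obtain ⟨a, ha⟩ := Finset.card_pos.mp (show 0 < S.card by omega)
  obtain ⟨b, hb⟩ := Finset.card_pos.mp (show 0 < (S.erase a).card from by
    have := Finset.pred_card_le_card_erase (s := S) (a := a); omega)
  obtain ⟨x, hx⟩ := Finset.card_pos.mp (show 0 < ((S.erase a).erase b).card from by
    have h1 := Finset.pred_card_le_card_erase (s := S) (a := a)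
    have h2 := Finset.pred_card_le_card_erase (s := S.erase a) (a := b); omega)
  obtain ⟨y, hy⟩ := Finset.card_pos.mp
    (show 0 < ((((S.erase a).erase b).erase x).erase (a + b + x)).card from by
      have h1 := Finset.pred_card_le_card_erase (s := S) (a := a)
      have h2 := Finset.pred_card_le_card_erase (s := S.erase a) (a := b)
      have h3 := Finset.pred_card_le_card_erase (s := (S.erase a).erase b) (a := x)
      have h4 := Finset.pred_card_le_card_erase
        (s := ((S.erase a).erase b).erase x) (a := a + b + x); omega)
  rw [Finset.mem_erase] at hb
  rw [Finset.mem_erase, Finset.mem_erase] at hx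
  rw [Finset.mem_erase, Finset.mem_erase, Finset.mem_erase, Finset.mem_erase] at hy
  obtain ⟨hba, hbS⟩ := hb
  obtain ⟨hxb, hxa, hxS⟩ := hx
  obtain ⟨hyabx, hyx, hyb, hya, hyS⟩ := hy
  have hab : a ≠ b := Ne.symm hba
  have hxy : x ≠ y := Ne.symm hyx
  -- nonzero sums
  have hp : a + b ≠ 0 := fun h => hab (by linear_combination h - f_add_self b)
  have hq : x + y ≠ 0 := fun h => hxy (by linear_combination h - f_add_self y)
  have hpq : (a + b) + (x + y) ≠ 0 := fun h =>
    hyabx (by linear_combination h - f_add_self a - f_add_self b - f_add_self x)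
  -- choose c
  obtain ⟨c, hc1, hc2, hcB⟩ := exists_good_c hm hp hq hpq (phi m a b) (phi m x y)
    ({a, b, x, y, a + x + y, b + x + y, a + b + x, a + b + y} : Finset (Vm m))
    (by
      apply le_trans (Finset.card_insert_le _ _)
      apply Nat.succ_le_succ
      apply le_trans (Finset.card_insert_le _ _)
      apply Nat.succ_le_succ
      apply le_trans (Finset.card_insert_le _ _)
      apply Nat.succ_le_succ
      apply le_trans (Finset.card_insert_le _ _)
      apply Nat.succ_le_succ
      apply le_trans (Finset.card_insert_le _ _)
      apply Nat.succ_le_succ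
      apply le_trans (Finset.card_insert_le _ _)
      apply Nat.succ_le_succ
      apply le_trans (Finset.card_insert_le _ _)
      apply Nat.succ_le_succ
      simp)
  simp only [Finset.mem_insert, Finset.mem_singleton] at hcB
  push_neg at hcB
  obtain ⟨hca, hcb, hcx, hcy, hcaxy, hcbxy, hcabx, hcaby⟩ := hcB
  -- the two quadruples
  obtain ⟨hT1card, hT1sum, hT1th⟩ := quad_props hab hca hcb hc1
  obtain ⟨hT2card, hT2sum, hT2th⟩ := quad_props hxy hcx hcy hc2
  set T1 : Finset (Vm m) := {a, b, c, a + b + c} with hT1def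
  set T2 : Finset (Vm m) := {x, y, c, x + y + c} with hT2def
  have hchi1 : chi T1 ∈ Ca m := generator_mem _ hT1card hT1sum hT1th
  have hchi2 : chi T2 ∈ Ca m := generator_mem _ hT2card hT2sum hT2th
  set ww : Vm m → ZMod 2 := w + chi T1 + chi T2 with hwwdef
  -- invariants of ww
  have hinvgen : ∀ {M : Type} [inst : AddCommMonoid M] [inst2 : Module (ZMod 2) M],
      ∀ (g : Vm m → M), (∑ v : Vm m, w v • g v) = 0 → (∑ v ∈ T1, g v) = 0 →
      (∑ v ∈ T2, g v) = 0 → (∑ v : Vm m, ww v • g v) = 0 := by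
    intro M inst inst2 g hw hg1 hg2
    rw [hwwdef, sum_weight_add (w + chi T1) (chi T2) g, sum_weight_add w (chi T1) g,
      sum_chi, sum_chi, hw, hg1, hg2, add_zero, add_zero]
  have hcard1 : (∑ v ∈ T1, (1 : ZMod 2)) = 0 := by
    rw [Finset.sum_const, hT1card, nsmul_eq_mul, mul_one]
    decide
  have hcard2 : (∑ v ∈ T2, (1 : ZMod 2)) = 0 := by
    rw [Finset.sum_const, hT2card, nsmul_eq_mul, mul_one]
    decide
  have inv1 : (∑ v : Vm m, ww v • (1 : ZMod 2)) = 0 := hinvgen _ h1 hcard1 hcard2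
  have inv2 : (∑ v : Vm m, ww v • v) = 0 := hinvgen _ h2 hT1sum hT2sum
  have inv3 : (∑ v : Vm m, ww v • theta0 m v) = 0 := hinvgen _ h3 hT1th hT2th
  -- membership facts
  have hwa : w a = 1 := z2_ne_zero (by have := ha; rw [hSdef, supp, Finset.mem_filter] at this; exact this.2)
  have hwb : w b = 1 := z2_ne_zero (by have := hbS; rw [hSdef, supp, Finset.mem_filter] at this; exact this.2)
  have hwx : w x = 1 := z2_ne_zero (by have := hxS; rw [hSdef, supp, Finset.mem_filter] at this; exact this.2)
  have hwy : w y = 1 := z2_ne_zero (by have := hyS; rw [hSdef, supp, Finset.mem_filter] at this; exact this.2)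
  have haT2 : a ∉ T2 := by
    rw [hT2def]
    simp only [Finset.mem_insert, Finset.mem_singleton]
    push_neg
    exact ⟨Ne.symm hxa, Ne.symm hya, Ne.symm hca, fun h =>
      hcaxy (by linear_combination -h - f_add_self x - f_add_self y)⟩
  have hbT2 : b ∉ T2 := by
    rw [hT2def]
    simp only [Finset.mem_insert, Finset.mem_singleton]
    push_neg
    exact ⟨Ne.symm hxb, Ne.symm hyb, Ne.symm hcb, fun h =>
      hcbxy (by linear_combination -h - f_add_self x - f_add_self y)⟩
  have hxT1 : x ∉ T1 := by
    rw [hT1def]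
    simp only [Finset.mem_insert, Finset.mem_singleton]
    push_neg
    exact ⟨hxa, hxb, Ne.symm hcx, fun h =>
      hcabx (by linear_combination -h - f_add_self a - f_add_self b)⟩
  have hyT1 : y ∉ T1 := by
    rw [hT1def]
    simp only [Finset.mem_insert, Finset.mem_singleton]
    push_neg
    exact ⟨hya, hyb, Ne.symm hcy, fun h =>
      hcaby (by linear_combination -h - f_add_self a - f_add_self b)⟩
  have haT1 : a ∈ T1 := by rw [hT1def]; simp
  have hbT1 : b ∈ T1 := by rw [hT1def]; simp
  have hcT1 : c ∈ T1 := by rw [hT1def]; simp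
  have hxT2 : x ∈ T2 := by rw [hT2def]; simp
  have hyT2 : y ∈ T2 := by rw [hT2def]; simp
  have hcT2 : c ∈ T2 := by rw [hT2def]; simp
  have chi_mem : ∀ (T : Finset (Vm m)) v, v ∈ T → chi T v = 1 := by
    intro T v hv; rw [chi, if_pos hv]
  have chi_nmem : ∀ (T : Finset (Vm m)) v, v ∉ T → chi T v = 0 := by
    intro T v hv; rw [chi, if_neg hv]
  -- support control
  have hsupp : supp ww ⊆ (S \ {a, b, x, y}) ∪ ({a + b + c, x + y + c} : Finset (Vm m)) := by
    intro v hv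
    rw [supp, Finset.mem_filter] at hv
    have hv2 := hv.2
    by_cases hvd : v = a + b + c ∨ v = x + y + c
    · apply Finset.mem_union_right
      simp only [Finset.mem_insert, Finset.mem_singleton]
      exact hvd
    push_neg at hvd
    apply Finset.mem_union_left
    rw [Finset.mem_sdiff]
    have hwwv : ww v = w v + chi T1 v + chi T2 v := rfl
    -- v is not a, b, x, y
    have hvna : v ≠ a := by
      intro h; subst h
      rw [hwwv, hwa, chi_mem T1 v haT1, chi_nmem T2 v haT2] at hv2
      exact hv2 (by decide)
    have hvnb : v ≠ b := by
      intro h; subst h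
      rw [hwwv, hwb, chi_mem T1 v hbT1, chi_nmem T2 v hbT2] at hv2
      exact hv2 (by decide)
    have hvnx : v ≠ x := by
      intro h; subst h
      rw [hwwv, hwx, chi_nmem T1 v hxT1, chi_mem T2 v hxT2] at hv2
      exact hv2 (by decide)
    have hvny : v ≠ y := by
      intro h; subst h
      rw [hwwv, hwy, chi_nmem T1 v hyT1, chi_mem T2 v hyT2] at hv2
      exact hv2 (by decide)
    have hwv : w v ≠ 0 := by
      by_cases hvc : v = c
      · subst hvc
        rw [hwwv, chi_mem T1 v hcT1, chi_mem T2 v hcT2] at hv2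
        intro h0; rw [h0] at hv2; exact hv2 (by decide)
      · have hvT1 : v ∉ T1 := by
          rw [hT1def]
          simp only [Finset.mem_insert, Finset.mem_singleton]
          push_neg
          exact ⟨hvna, hvnb, hvc, hvd.1⟩
        have hvT2 : v ∉ T2 := by
          rw [hT2def]
          simp only [Finset.mem_insert, Finset.mem_singleton]
          push_neg
          exact ⟨hvnx, hvny, hvc, hvd.2⟩
        rw [hwwv, chi_nmem T1 v hvT1, chi_nmem T2 v hvT2, add_zero, add_zero] at hv2
        exact hv2
    constructor
    · rw [hSdef, supp, Finset.mem_filter]; exact ⟨Finset.mem_univ v, hwv⟩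
    · simp only [Finset.mem_insert, Finset.mem_singleton]
      push_neg
      exact ⟨hvna, hvnb, hvnx, hvny⟩
  -- cardinality drop
  have habxyS : ({a, b, x, y} : Finset (Vm m)) ⊆ S := by
    intro v hv
    simp only [Finset.mem_insert, Finset.mem_singleton] at hv
    rcases hv with rfl | rfl | rfl | rfl
    exacts [ha, hbS, hxS, hyS]
  have habxycard : ({a, b, x, y} : Finset (Vm m)).card = 4 := by
    rw [show ({a, b, x, y} : Finset (Vm m)) = insert a (insert b (insert x {y})) from rfl,
      Finset.card_insert_of_notMem (by
        simp only [Finset.mem_insert, Finset.mem_singleton]; push_neg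
        exact ⟨hab, Ne.symm hxa, Ne.symm hya⟩),
      Finset.card_insert_of_notMem (by
        simp only [Finset.mem_insert, Finset.mem_singleton]; push_neg
        exact ⟨Ne.symm hxb, Ne.symm hyb⟩),
      Finset.card_insert_of_notMem (by simp only [Finset.mem_singleton]; exact hxy),
      Finset.card_singleton]
  have hdrop : (supp ww).card < n := by
    have hc1' : (supp ww).card ≤ ((S \ {a, b, x, y}) ∪ ({a + b + c, x + y + c} : Finset (Vm m))).card :=
      Finset.card_le_card hsupp
    have hc2' : ((S \ {a, b, x, y}) ∪ ({a + b + c, x + y + c} : Finset (Vm m))).card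
        ≤ (S \ {a, b, x, y}).card + ({a + b + c, x + y + c} : Finset (Vm m)).card :=
      Finset.card_union_le _ _
    have hc3' : (S \ ({a, b, x, y} : Finset (Vm m))).card = n - 4 := by
      rw [Finset.card_sdiff_of_subset habxyS, habxycard, hn]
    have hc4' : ({a + b + c, x + y + c} : Finset (Vm m)).card ≤ 2 := by
      apply le_trans (Finset.card_insert_le _ _)
      simp
    omega
  -- apply induction hypothesis
  have hww : ww ∈ Ca m := ih (supp ww).card hdrop ww rfl inv1 inv2 inv3
  have hfinal : w = ww + chi T1 + chi T2 := by
    rw [hwwdef]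
    calc w = w + (chi T1 + chi T1) + (chi T2 + chi T2) := by
          rw [f_add_self, f_add_self, add_zero, add_zero]
      _ = w + chi T1 + chi T2 + chi T1 + chi T2 := by ring
  rw [hfinal]
  exact add_mem (add_mem hww hchi1) hchi2

def Kmod (m : ℕ) : Submodule (ZMod 2) (Vm m → ZMod 2) where
  carrier := {w | (∑ x : Vm m, w x • (1 : ZMod 2)) = 0 ∧ (∑ x : Vm m, w x • x) = 0 ∧
    (∑ x : Vm m, w x • theta0 m x) = 0}
  add_mem' := by
    rintro u v ⟨hu1, hu2, hu3⟩ ⟨hv1, hv2, hv3⟩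
    refine ⟨?_, ?_, ?_⟩
    · rw [sum_weight_add u v, hu1, hv1, add_zero]
    · rw [sum_weight_add u v, hu2, hv2, add_zero]
    · rw [sum_weight_add u v, hu3, hv3, add_zero]
  zero_mem' := by
    refine ⟨?_, ?_, ?_⟩ <;> simp
  smul_mem' := by
    rintro r u ⟨hu1, hu2, hu3⟩
    have key : ∀ {M : Type} [inst : AddCommMonoid M] [inst2 : Module (ZMod 2) M]
        (g : Vm m → M), (∑ x : Vm m, u x • g x) = 0 → (∑ x : Vm m, (r • u) x • g x) = 0 := by
      intro M inst inst2 g hg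
      have : ∀ x : Vm m, (r • u) x • g x = r • (u x • g x) := by
        intro x; rw [Pi.smul_apply, smul_eq_mul, mul_smul]
      rw [Finset.sum_congr rfl (fun x _ => this x), ← Finset.smul_sum, hg, smul_zero]
    exact ⟨key _ hu1, key _ hu2, key _ hu3⟩

lemma Ca_le_Kmod (m : ℕ) : Ca m ≤ Kmod m := by
  rw [Ca, Submodule.span_le]
  rintro w ⟨T, hT4, hTsum, hTth, rfl⟩
  refine ⟨?_, ?_, ?_⟩
  · rw [sum_chi T (fun _ => (1 : ZMod 2)), Finset.sum_const, hT4, nsmul_eq_mul, mul_one]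
    decide
  · rw [sum_chi T (fun x => x)]; exact hTsum
  · rw [sum_chi T (fun x => theta0 m x)]; exact hTth

theorem stmt_13 (m : ℕ) (hm : 3 ≤ m) (w : Vm m → ZMod 2) :
    w ∈ Ca m ↔
      Even (Finset.univ.filter fun x => w x ≠ 0).card ∧
      (∑ x ∈ Finset.univ.filter fun x => w x ≠ 0, x) = 0 ∧
      (∑ x ∈ Finset.univ.filter fun x => w x ≠ 0, theta0 m x) = 0 := by
  have hsupp_eq : (Finset.univ.filter fun x => w x ≠ 0) = supp w := rfl
  constructor
  · intro hw
    obtain ⟨h1, h2, h3⟩ := Ca_le_Kmod m hw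
    refine ⟨?_, ?_, ?_⟩
    · rw [hsupp_eq]
      have hs := sum_supp w (fun _ => (1 : ZMod 2))
      rw [h1, Finset.sum_const, nsmul_eq_mul, mul_one] at hs
      rw [Nat.even_iff, ← Nat.dvd_iff_mod_eq_zero]
      exact (ZMod.natCast_eq_zero_iff _ 2).mp hs
    · rw [hsupp_eq]
      have hs := sum_supp w (fun x => x)
      rwa [h2] at hs
    · rw [hsupp_eq]
      have hs := sum_supp w (fun x => theta0 m x)
      rwa [h3] at hs
  · rintro ⟨h1, h2, h3⟩
    rw [hsupp_eq] at h1 h2 h3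
    apply mem_Ca_of_inv hm (supp w).card w rfl
    · rw [← sum_supp w (fun _ => (1 : ZMod 2)), Finset.sum_const, nsmul_eq_mul, mul_one]
      exact (ZMod.natCast_eq_zero_iff _ 2).mpr h1.two_dvd
    · rw [← sum_supp w (fun x => x)]; exact h2
    · rw [← sum_supp w (fun x => theta0 m x)]; exact h3
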